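/- Spatial total variation diminishing property (convex weights): assume the strong CFL condition λ(M + 2L) ≤ 1 and that the weights are convex, i.e. γ_{k−1} + γ_{k+1} ≥ 2γ_k for all k ≥ 1. Then for every n ∈ ℕ: ∑_{j∈ℤ} |W^{n+1}_{j+1} − W^{n+1}_j| ≤ ∑_{j∈ℤ} |Wⁿ_{j+1} − Wⁿ_j| ≤ ∑_{j∈ℤ} |ρ⁰_{j+1} − ρ⁰_j|, where the sums of nonnegative terms are valued in [0,∞]. -/

import Mathlib

open scoped ENNReal
open Filter

/-- Monotone decrease from step bound. -/
lemma gw_anti {u : ℕ → ℝ} (hmono : ∀ k, u (k+1) ≤ u k) :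
    ∀ m n, m ≤ n → u n ≤ u m := by
  intro m n hn
  induction n with
  | zero => simp [Nat.le_zero.mp hn]
  | succ k ih =>
    rcases Nat.lt_or_ge m (k+1) with h | h
    · exact le_trans (hmono k) (ih (Nat.lt_succ_iff.mp h))
    · have : m = k+1 := le_antisymm hn h
      simp [this]

lemma gw_nonneg {u : ℕ → ℝ} (hmono : ∀ k, u (k+1) ≤ u k)
    (h0 : Tendsto u atTop (nhds 0)) : ∀ m, 0 ≤ u m := by
  intro m
  refine le_of_tendsto h0 ?_
  filter_upwards [eventually_ge_atTop m] with n hn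
  exact gw_anti hmono m n hn

/-- Telescoping tail sum for a nonincreasing null sequence. -/
lemma gw_tele (u : ℕ → ℝ) (hmono : ∀ k, u (k+1) ≤ u k)
    (h0 : Tendsto u atTop (nhds 0)) (t : ℕ) :
    HasSum (fun m => u (m+t) - u (m+t+1)) (u t) := by
  have hnn : ∀ m, 0 ≤ u (m+t) - u (m+t+1) := fun m => by
    have := hmono (m+t); linarith
  have hpart : ∀ n, ∑ m ∈ Finset.range n, (u (m+t) - u (m+t+1)) = u t - u (n+t) := by
    intro n
    have h2 := Finset.sum_range_sub' (f := fun m => u (m+t)) n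
    rw [Finset.sum_sub_distrib]
    rw [show (∑ x ∈ Finset.range n, u (x + t + 1)) = ∑ x ∈ Finset.range n, u (x + 1 + t) from
      Finset.sum_congr rfl (fun x _ => by ring_nf)]
    simpa using h2
  have hsummable : Summable (fun m => u (m+t) - u (m+t+1)) := by
    apply summable_of_sum_range_le hnn
    intro n
    rw [hpart n]
    have := gw_nonneg hmono h0 (n+t)
    linarith
  have htendsto : Tendsto (fun n => ∑ m ∈ Finset.range n, (u (m+t) - u (m+t+1)))
      atTop (nhds (u t)) := by
    simp only [hpart]
    have : Tendsto (fun n => u (n+t)) atTop (nhds 0) :=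
      h0.comp (tendsto_add_atTop_nat t)
    simpa using (tendsto_const_nhds (x := u t)).sub this
  exact (hsummable.hasSum_iff_tendsto_nat).mpr htendsto

/-- Summability by domination with a nonnegative summable weight. -/
lemma gw_summable_mul {c : ℕ → ℝ} (hc : Summable c) (hcnn : ∀ k, 0 ≤ c k)
    (X : ℕ → ℝ) {Cb : ℝ} (hX : ∀ k, |X k| ≤ Cb) :
    Summable (fun k => c k * X k) := by
  apply Summable.of_norm_bounded (hc.mul_right Cb)
  intro k
  rw [Real.norm_eq_abs, abs_mul, abs_of_nonneg (hcnn k)]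
  exact mul_le_mul_of_nonneg_left (hX k) (hcnn k)

section
variable {γ : ℕ → ℝ} {q w : ℤ → ℝ}

lemma gw_w_mem (hγnn : ∀ k, 0 ≤ γ k) (hγsum : HasSum γ 1)
    (hq : ∀ j, q j ∈ Set.Icc (0:ℝ) 1)
    (hw : ∀ j, w j = ∑' k : ℕ, γ k * q (j + (k:ℤ))) :
    ∀ j, w j ∈ Set.Icc (0:ℝ) 1 := by
  intro j
  have hs : Summable (fun k : ℕ => γ k * q (j + (k:ℤ))) :=
    gw_summable_mul hγsum.summable hγnn _ (Cb := 1)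
      (fun k => abs_le.mpr ⟨by linarith [(hq (j+(k:ℤ))).1], (hq (j+(k:ℤ))).2⟩)
  constructor
  · rw [hw j]
    exact tsum_nonneg (fun k => mul_nonneg (hγnn k) (hq _).1)
  · rw [hw j]
    calc ∑' k : ℕ, γ k * q (j + (k:ℤ)) ≤ ∑' k : ℕ, γ k := by
          apply Summable.tsum_le_tsum _ hs hγsum.summable
          intro k
          nlinarith [(hq (j+(k:ℤ))).2, hγnn k]
      _ = 1 := hγsum.tsum_eq

lemma gw_I2 (hγnn : ∀ k, 0 ≤ γ k) (hγsum : HasSum γ 1)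
    (hq : ∀ j, q j ∈ Set.Icc (0:ℝ) 1)
    (hw : ∀ j, w j = ∑' k : ℕ, γ k * q (j + (k:ℤ))) (j : ℤ) :
    w (j+1) - w j = (∑' k : ℕ, (γ k - γ (k+1)) * q (j + (k:ℤ) + 1)) - γ 0 * q j := by
  have habs : ∀ (c : ℤ) (k : ℕ), |q (c + (k:ℤ))| ≤ 1 := fun c k =>
    abs_le.mpr ⟨by linarith [(hq (c+(k:ℤ))).1], (hq (c+(k:ℤ))).2⟩
  have hs1 : Summable (fun k : ℕ => γ k * q (j + (k:ℤ) + 1)) := by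
    have := gw_summable_mul hγsum.summable hγnn (fun k : ℕ => q ((j+1) + (k:ℤ))) (Cb := 1)
      (habs (j+1))
    apply this.congr
    intro k; congr 1; ring
  have hs2 : Summable (fun k : ℕ => γ k * q (j + (k:ℤ))) :=
    gw_summable_mul hγsum.summable hγnn _ (Cb := 1) (habs j)
  have hs3 : Summable (fun k : ℕ => γ (k+1) * q (j + (k:ℤ) + 1)) := by
    apply gw_summable_mul ((summable_nat_add_iff 1).mpr hγsum.summable)
      (fun k => hγnn (k+1)) (fun k : ℕ => q (j + (k:ℤ) + 1)) (Cb := 1)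
    intro k
    have := habs (j+1) k
    rw [show j + 1 + (k:ℤ) = j + (k:ℤ) + 1 by ring] at this
    exact this
  have e1 : w (j+1) = ∑' k : ℕ, γ k * q (j + (k:ℤ) + 1) := by
    rw [hw (j+1)]
    exact tsum_congr (fun k => by rw [show j + 1 + (k:ℤ) = j + (k:ℤ) + 1 by ring])
  have e2 : w j = γ 0 * q j + ∑' k : ℕ, γ (k+1) * q (j + (k:ℤ) + 1) := by
    rw [hw j, Summable.tsum_eq_zero_add hs2]
    congr 1
    · simp
    · exact tsum_congr (fun k => by push_cast; ring_nf)
  have hsub : (∑' k : ℕ, γ k * q (j + (k:ℤ) + 1)) - (∑' k : ℕ, γ (k+1) * q (j + (k:ℤ) + 1))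
      = ∑' k : ℕ, (γ k - γ (k+1)) * q (j + (k:ℤ) + 1) := by
    rw [← Summable.tsum_sub hs1 hs3]
    exact tsum_congr (fun k => by ring)
  rw [e1, e2]
  linarith [hsub]

end

section
variable {lam M L : ℝ} {V : ℝ → ℝ} {γ : ℕ → ℝ} {q w : ℤ → ℝ}

lemma gw_g_summable (hγmono : ∀ k, γ (k+1) ≤ γ k) (hγsum : HasSum γ 1) :
    HasSum (fun k => γ k - γ (k+1)) (γ 0) := by
  have h0 : Tendsto γ atTop (nhds 0) := hγsum.summable.tendsto_atTop_zero
  have := gw_tele γ hγmono h0 0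
  simpa using this

lemma gw_gamma0_le_one (hγnn : ∀ k, 0 ≤ γ k) (hγsum : HasSum γ 1) : γ 0 ≤ 1 := by
  have := Summable.le_tsum hγsum.summable 0 (fun k _ => hγnn k)
  rwa [hγsum.tsum_eq] at this

lemma gw_D_le (hγnn : ∀ k, 0 ≤ γ k) (hγmono : ∀ k, γ (k+1) ≤ γ k) (hγsum : HasSum γ 1)
    (hq : ∀ j, q j ∈ Set.Icc (0:ℝ) 1)
    (hw : ∀ j, w j = ∑' k : ℕ, γ k * q (j + (k:ℤ))) (j : ℤ) :
    w (j+1) - w j ≤ γ 0 * (1 - q j) := by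
  rw [gw_I2 hγnn hγsum hq hw j]
  have hg := gw_g_summable hγmono hγsum
  have hsum1 : (∑' k : ℕ, (γ k - γ (k+1)) * q (j + (k:ℤ) + 1)) ≤ γ 0 := by
    calc (∑' k : ℕ, (γ k - γ (k+1)) * q (j + (k:ℤ) + 1)) ≤ ∑' k : ℕ, (γ k - γ (k+1)) := by
          apply Summable.tsum_le_tsum _ _ hg.summable
          · intro k
            nlinarith [(hq (j+(k:ℤ)+1)).2, hγmono k, (hq (j+(k:ℤ)+1)).1]
          · exact gw_summable_mul hg.summable (fun k => by linarith [hγmono k]) _ (Cb := 1)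
              (fun k => abs_le.mpr ⟨by linarith [(hq (j+(k:ℤ)+1)).1], (hq (j+(k:ℤ)+1)).2⟩)
      _ = γ 0 := hg.tsum_eq
  nlinarith [(hq j).1]

lemma gw_rho_step (hlam : 0 < lam) (hM : 0 ≤ M) (hL : 0 ≤ L)
    (hVlip : ∀ x y : ℝ, |V x - V y| ≤ L * |x - y|)
    (hVmono : ∀ x ∈ Set.Icc (0:ℝ) 1, ∀ y ∈ Set.Icc (0:ℝ) 1, x ≤ y → V y ≤ V x)
    (hVbd : ∀ ξ ∈ Set.Icc (0:ℝ) 1, V ξ ∈ Set.Icc (0:ℝ) M)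
    (hγnn : ∀ k, 0 ≤ γ k) (hγmono : ∀ k, γ (k+1) ≤ γ k) (hγsum : HasSum γ 1)
    (hCFL : lam * (M + 2*L) ≤ 1)
    (hq : ∀ j, q j ∈ Set.Icc (0:ℝ) 1)
    (hw : ∀ j, w j = ∑' k : ℕ, γ k * q (j + (k:ℤ))) (j : ℤ) :
    q j + lam * (q (j-1) * V (w j) - q j * V (w (j+1))) ∈ Set.Icc (0:ℝ) 1 := by
  have hw01 := gw_w_mem hγnn hγsum hq hw
  have hA := hVbd (w j) (hw01 j)
  have hB := hVbd (w (j+1)) (hw01 (j+1))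
  have hγ0 : γ 0 ≤ 1 := gw_gamma0_le_one hγnn hγsum
  have hγ0nn : 0 ≤ γ 0 := hγnn 0
  have hqj := hq j
  have hqj1 := hq (j-1)
  have hlamM : lam * M ≤ 1 := by nlinarith
  have hVd : V (w j) - V (w (j+1)) ≤ L * (1 - q j) := by
    rcases le_or_gt (w j) (w (j+1)) with hle | hlt
    · have h1 := hVlip (w j) (w (j+1))
      have h2 : |w j - w (j+1)| = w (j+1) - w j := by
        rw [abs_sub_comm]
        exact abs_of_nonneg (by linarith)
      have h3 := gw_D_le hγnn hγmono hγsum hq hw j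
      calc V (w j) - V (w (j+1)) ≤ |V (w j) - V (w (j+1))| := le_abs_self _
        _ ≤ L * |w j - w (j+1)| := h1
        _ = L * (w (j+1) - w j) := by rw [h2]
        _ ≤ L * (γ 0 * (1 - q j)) := by nlinarith
        _ ≤ L * (1 - q j) := by
              nlinarith [mul_nonneg (mul_nonneg hL (show (0:ℝ) ≤ 1 - q j by linarith [hqj.2]))
                (show (0:ℝ) ≤ 1 - γ 0 by linarith)]
    · have h4 : V (w j) ≤ V (w (j+1)) := hVmono (w (j+1)) (hw01 (j+1)) (w j) (hw01 j) hlt.le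
      nlinarith [hqj.2]
  constructor
  · have heq : q j + lam * (q (j-1) * V (w j) - q j * V (w (j+1)))
        = q j * (1 - lam * V (w (j+1))) + lam * (q (j-1) * V (w j)) := by ring
    rw [heq]
    have h1 : lam * V (w (j+1)) ≤ 1 := by nlinarith [hB.2]
    have h2 : 0 ≤ q j * (1 - lam * V (w (j+1))) := mul_nonneg hqj.1 (by linarith)
    have h3 : 0 ≤ lam * (q (j-1) * V (w j)) :=
      mul_nonneg hlam.le (mul_nonneg hqj1.1 hA.1)
    linarith
  · set A := V (w j)
    set B := V (w (j+1))
    have h1 : q (j-1) * (A - B) ≤ L * (1 - q j) := by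
      rcases le_or_gt 0 (A - B) with h | h
      · nlinarith [hqj1.2, hqj1.1]
      · nlinarith [hqj.2, hqj1.1]
    have h2 : (q (j-1) - q j) * B ≤ (1 - q j) * M := by
      rcases le_or_gt 0 (q (j-1) - q j) with h | h
      · nlinarith [hB.2, hqj1.2, hB.1]
      · nlinarith [hB.1, hqj.2]
    have h3 : q (j-1) * A - q j * B = q (j-1) * (A - B) + (q (j-1) - q j) * B := by ring
    have hlamLM : lam * (L + M) ≤ 1 := by nlinarith
    have h4 : lam * (q (j-1) * A - q j * B) ≤ lam * (L * (1 - q j) + (1 - q j) * M) := by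
      apply mul_le_mul_of_nonneg_left _ hlam.le
      rw [h3]; linarith
    have h5 : lam * (L * (1 - q j) + (1 - q j) * M) ≤ 1 - q j := by
      have hc : 0 ≤ 1 - q j := by linarith [hqj.2]
      nlinarith
    linarith

end

section
variable {γ : ℕ → ℝ} {q w : ℤ → ℝ}

lemma gw_tv_init (hγnn : ∀ k, 0 ≤ γ k) (hγsum : HasSum γ 1)
    (hqb : ∀ j, |q j| ≤ 1)
    (hw : ∀ j, w j = ∑' k : ℕ, γ k * q (j + (k:ℤ))) :
    ∑' j : ℤ, ENNReal.ofReal |w (j+1) - w j| ≤ ∑' j : ℤ, ENNReal.ofReal |q (j+1) - q j| := by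
  have hsummδ : ∀ j : ℤ, Summable (fun k : ℕ => γ k * (q (j + (k:ℤ) + 1) - q (j + (k:ℤ)))) := by
    intro j
    apply gw_summable_mul hγsum.summable hγnn _ (Cb := 2)
    intro k
    calc |q (j + (k:ℤ) + 1) - q (j + (k:ℤ))| ≤ |q (j + (k:ℤ) + 1)| + |q (j + (k:ℤ))| :=
          abs_sub _ _
      _ ≤ 2 := by linarith [hqb (j + (k:ℤ) + 1), hqb (j + (k:ℤ))]
  have hD : ∀ j : ℤ, w (j+1) - w j = ∑' k : ℕ, γ k * (q (j + (k:ℤ) + 1) - q (j + (k:ℤ))) := by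
    intro j
    have hs1 : Summable (fun k : ℕ => γ k * q (j + (k:ℤ) + 1)) :=
      gw_summable_mul hγsum.summable hγnn _ (Cb := 1) (fun k => hqb _)
    have hs2 : Summable (fun k : ℕ => γ k * q (j + (k:ℤ))) :=
      gw_summable_mul hγsum.summable hγnn _ (Cb := 1) (fun k => hqb _)
    have e1 : w (j+1) = ∑' k : ℕ, γ k * q (j + (k:ℤ) + 1) := by
      rw [hw (j+1)]
      exact tsum_congr (fun k => by rw [show j + 1 + (k:ℤ) = j + (k:ℤ) + 1 by ring])
    rw [e1, hw j, ← Summable.tsum_sub hs1 hs2]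
    exact tsum_congr (fun k => by ring)
  have habs : ∀ j : ℤ, ENNReal.ofReal |w (j+1) - w j|
      ≤ ∑' k : ℕ, ENNReal.ofReal (γ k * |q (j + (k:ℤ) + 1) - q (j + (k:ℤ))|) := by
    intro j
    have hsabs : Summable (fun k : ℕ => γ k * |q (j + (k:ℤ) + 1) - q (j + (k:ℤ))|) := by
      apply gw_summable_mul hγsum.summable hγnn _ (Cb := 2)
      intro k
      rw [abs_abs]
      calc |q (j + (k:ℤ) + 1) - q (j + (k:ℤ))| ≤ |q (j + (k:ℤ) + 1)| + |q (j + (k:ℤ))| :=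
            abs_sub _ _
        _ ≤ 2 := by linarith [hqb (j + (k:ℤ) + 1), hqb (j + (k:ℤ))]
    have h1 : |w (j+1) - w j| ≤ ∑' k : ℕ, γ k * |q (j + (k:ℤ) + 1) - q (j + (k:ℤ))| := by
      rw [hD j]
      have := norm_tsum_le_tsum_norm (f := fun k : ℕ => γ k * (q (j + (k:ℤ) + 1) - q (j + (k:ℤ))))
        (by
          apply hsabs.congr
          intro k
          rw [Real.norm_eq_abs, abs_mul, abs_of_nonneg (hγnn k)])
      rw [Real.norm_eq_abs] at this
      apply this.trans
      apply le_of_eq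
      exact tsum_congr (fun k => by rw [Real.norm_eq_abs, abs_mul, abs_of_nonneg (hγnn k)])
    calc ENNReal.ofReal |w (j+1) - w j|
        ≤ ENNReal.ofReal (∑' k : ℕ, γ k * |q (j + (k:ℤ) + 1) - q (j + (k:ℤ))|) :=
          ENNReal.ofReal_le_ofReal h1
      _ = ∑' k : ℕ, ENNReal.ofReal (γ k * |q (j + (k:ℤ) + 1) - q (j + (k:ℤ))|) :=
          ENNReal.ofReal_tsum_of_nonneg (fun k => mul_nonneg (hγnn k) (abs_nonneg _)) hsabs
  calc ∑' j : ℤ, ENNReal.ofReal |w (j+1) - w j|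
      ≤ ∑' j : ℤ, ∑' k : ℕ, ENNReal.ofReal (γ k * |q (j + (k:ℤ) + 1) - q (j + (k:ℤ))|) :=
        ENNReal.tsum_le_tsum habs
    _ = ∑' k : ℕ, ∑' j : ℤ, ENNReal.ofReal (γ k * |q (j + (k:ℤ) + 1) - q (j + (k:ℤ))|) :=
        ENNReal.tsum_comm
    _ = ∑' k : ℕ, ∑' j : ℤ, ENNReal.ofReal (γ k * |q (j + 1) - q j|) := by
        apply tsum_congr
        intro k
        exact (Equiv.addRight ((k:ℤ))).tsum_eq
          (fun j : ℤ => ENNReal.ofReal (γ k * |q (j + 1) - q j|))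
    _ = ∑' k : ℕ, ENNReal.ofReal (γ k) * ∑' j : ℤ, ENNReal.ofReal |q (j + 1) - q j| := by
        apply tsum_congr
        intro k
        rw [← ENNReal.tsum_mul_left]
        exact tsum_congr (fun j => (ENNReal.ofReal_mul (hγnn k)).symm ▸ rfl)
    _ = (∑' k : ℕ, ENNReal.ofReal (γ k)) * ∑' j : ℤ, ENNReal.ofReal |q (j + 1) - q j| :=
        ENNReal.tsum_mul_right
    _ = ∑' j : ℤ, ENNReal.ofReal |q (j + 1) - q j| := by
        rw [← ENNReal.ofReal_tsum_of_nonneg hγnn hγsum.summable, hγsum.tsum_eq,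
          ENNReal.ofReal_one, one_mul]
end

/-- first difference of the kernel -/
def gwg (γ : ℕ → ℝ) (k : ℕ) : ℝ := γ k - γ (k+1)
/-- second difference of the kernel -/
def gwh (γ : ℕ → ℝ) (k : ℕ) : ℝ := gwg γ k - gwg γ (k+1)
/-- discrete slope of V along W -/
noncomputable def gwb (V : ℝ → ℝ) (w : ℤ → ℝ) (j : ℤ) : ℝ :=
  if w (j+1) - w j = 0 then 0 else (V (w j) - V (w (j+1))) / (w (j+1) - w j)
/-- tail coefficient sums -/
noncomputable def gwK (γ : ℕ → ℝ) (q : ℤ → ℝ) (j : ℤ) (s : ℕ) : ℝ :=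
  ∑' m : ℕ, gwh γ (m+s) * q (j + (s:ℤ) + (m:ℤ) + 1)

section
variable {lam M L : ℝ} {V : ℝ → ℝ} {γ : ℕ → ℝ} {q w : ℤ → ℝ}

lemma gw_g_nonneg (hγmono : ∀ k, γ (k+1) ≤ γ k) (k : ℕ) : 0 ≤ gwg γ k :=
  sub_nonneg.mpr (hγmono k)

lemma gw_g_anti (hconv : ∀ k, 2 * γ (k+1) ≤ γ k + γ (k+2)) (k : ℕ) :
    gwg γ (k+1) ≤ gwg γ k := by
  have := hconv k
  simp only [gwg]
  have h2 : k + 1 + 1 = k + 2 := by ring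
  rw [h2]
  linarith

lemma gw_g_tendsto (hγsum : HasSum γ 1) : Tendsto (gwg γ) atTop (nhds 0) := by
  have h0 : Tendsto γ atTop (nhds 0) := hγsum.summable.tendsto_atTop_zero
  have h1 : Tendsto (fun k => γ (k+1)) atTop (nhds 0) := h0.comp (tendsto_add_atTop_nat 1)
  have h2 := h0.sub h1; rw [sub_zero] at h2; exact h2

lemma gw_h_nonneg (hconv : ∀ k, 2 * γ (k+1) ≤ γ k + γ (k+2)) (k : ℕ) : 0 ≤ gwh γ k :=
  sub_nonneg.mpr (gw_g_anti hconv k)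

lemma gw_g_tail (hγmono : ∀ k, γ (k+1) ≤ γ k) (hγsum : HasSum γ 1) (t : ℕ) :
    HasSum (fun m => gwg γ (m+t)) (γ t) := by
  have := gw_tele γ hγmono hγsum.summable.tendsto_atTop_zero t
  simpa [gwg] using this

lemma gw_h_tail (hconv : ∀ k, 2 * γ (k+1) ≤ γ k + γ (k+2)) (hγsum : HasSum γ 1) (t : ℕ) :
    HasSum (fun m => gwh γ (m+t)) (gwg γ t) := by
  have := gw_tele (gwg γ) (gw_g_anti hconv) (gw_g_tendsto hγsum) t
  simpa [gwh] using this

lemma gw_g_le (hγnn : ∀ k, 0 ≤ γ k) (k : ℕ) : gwg γ k ≤ γ k := by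
  simp only [gwg]; linarith [hγnn (k+1)]

lemma gw_h_le (hγmono : ∀ k, γ (k+1) ≤ γ k) (k : ℕ) : gwh γ k ≤ gwg γ k := by
  simp only [gwh]; linarith [gw_g_nonneg hγmono (k+1)]

lemma gw_bD (hVmono : ∀ x ∈ Set.Icc (0:ℝ) 1, ∀ y ∈ Set.Icc (0:ℝ) 1, x ≤ y → V y ≤ V x)
    (hw01 : ∀ j, w j ∈ Set.Icc (0:ℝ) 1) (j : ℤ) :
    gwb V w j * (w (j+1) - w j) = V (w j) - V (w (j+1)) := by
  by_cases h : w (j+1) - w j = 0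
  · have : w (j+1) = w j := by linarith [sub_eq_zero.mp h]
    simp [gwb, h, this]
  · simp [gwb, h, div_mul_cancel₀ _ h]

lemma gw_b_nonneg (hVmono : ∀ x ∈ Set.Icc (0:ℝ) 1, ∀ y ∈ Set.Icc (0:ℝ) 1, x ≤ y → V y ≤ V x)
    (hw01 : ∀ j, w j ∈ Set.Icc (0:ℝ) 1) (j : ℤ) : 0 ≤ gwb V w j := by
  by_cases h : w (j+1) - w j = 0
  · simp [gwb, h]
  · simp only [gwb, h, if_false]
    rcases lt_or_gt_of_ne h with hlt | hgt
    · rw [div_nonneg_iff]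
      right
      have := hVmono (w (j+1)) (hw01 (j+1)) (w j) (hw01 j) (by linarith)
      exact ⟨by linarith, hlt.le⟩
    · apply div_nonneg _ hgt.le
      have := hVmono (w j) (hw01 j) (w (j+1)) (hw01 (j+1)) (by linarith)
      linarith

lemma gw_b_le (hL : 0 ≤ L) (hVlip : ∀ x y : ℝ, |V x - V y| ≤ L * |x - y|) (j : ℤ) :
    gwb V w j ≤ L := by
  by_cases h : w (j+1) - w j = 0
  · simp [gwb, h, hL]
  · simp only [gwb, h, if_false]
    have hlip := hVlip (w j) (w (j+1))
    rw [abs_sub_comm (w j) (w (j+1))] at hlip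
    rcases lt_or_gt_of_ne h with hlt | hgt
    · rw [div_le_iff_of_neg hlt]
      have h1 : |w (j+1) - w j| = -(w (j+1) - w j) := abs_of_neg hlt
      have h2 : -(V (w j) - V (w (j+1))) ≤ |V (w j) - V (w (j+1))| := neg_le_abs _
      nlinarith
    · rw [div_le_iff₀ hgt]
      have h1 : |w (j+1) - w j| = w (j+1) - w j := abs_of_pos hgt
      have h2 : V (w j) - V (w (j+1)) ≤ |V (w j) - V (w (j+1))| := le_abs_self _
      nlinarith

end

section
variable {lam M L : ℝ} {V : ℝ → ℝ} {γ : ℕ → ℝ} {q w : ℤ → ℝ}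

lemma gw_K_summable (hconv : ∀ k, 2 * γ (k+1) ≤ γ k + γ (k+2)) (hγsum : HasSum γ 1)
    (hq : ∀ j, q j ∈ Set.Icc (0:ℝ) 1) (j : ℤ) (s : ℕ) :
    Summable (fun m : ℕ => gwh γ (m+s) * q (j + (s:ℤ) + (m:ℤ) + 1)) :=
  gw_summable_mul (gw_h_tail hconv hγsum s).summable (fun m => gw_h_nonneg hconv (m+s))
    _ (Cb := 1) (fun m => abs_le.mpr ⟨by linarith [(hq (j+(s:ℤ)+(m:ℤ)+1)).1],
      (hq (j+(s:ℤ)+(m:ℤ)+1)).2⟩)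

lemma gw_K_nonneg (hconv : ∀ k, 2 * γ (k+1) ≤ γ k + γ (k+2))
    (hq : ∀ j, q j ∈ Set.Icc (0:ℝ) 1) (j : ℤ) (s : ℕ) : 0 ≤ gwK γ q j s :=
  tsum_nonneg (fun m => mul_nonneg (gw_h_nonneg hconv (m+s)) (hq _).1)

lemma gw_K_le (hconv : ∀ k, 2 * γ (k+1) ≤ γ k + γ (k+2)) (hγsum : HasSum γ 1)
    (hq : ∀ j, q j ∈ Set.Icc (0:ℝ) 1) (j : ℤ) (s : ℕ) : gwK γ q j s ≤ gwg γ s := by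
  have h1 : gwK γ q j s ≤ ∑' m : ℕ, gwh γ (m+s) := by
    apply Summable.tsum_le_tsum _ (gw_K_summable hconv hγsum hq j s) (gw_h_tail hconv hγsum s).summable
    intro m
    nlinarith [(hq (j+(s:ℤ)+(m:ℤ)+1)).2, gw_h_nonneg hconv (m+s)]
  rwa [(gw_h_tail hconv hγsum s).tsum_eq] at h1

lemma gw_K_rec (hconv : ∀ k, 2 * γ (k+1) ≤ γ k + γ (k+2)) (hγsum : HasSum γ 1)
    (hq : ∀ j, q j ∈ Set.Icc (0:ℝ) 1) (j : ℤ) (s : ℕ) :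
    gwK γ q j s = gwh γ s * q (j + (s:ℤ) + 1) + gwK γ q j (s+1) := by
  rw [gwK, Summable.tsum_eq_zero_add (gw_K_summable hconv hγsum hq j s)]
  congr 1
  · norm_num
  · rw [gwK]
    apply tsum_congr
    intro m
    have h1 : m + 1 + s = m + (s+1) := by ring
    rw [h1]
    congr 1
    push_cast
    ring

lemma gw_vtel (hVmono : ∀ x ∈ Set.Icc (0:ℝ) 1, ∀ y ∈ Set.Icc (0:ℝ) 1, x ≤ y → V y ≤ V x)
    (hw01 : ∀ j, w j ∈ Set.Icc (0:ℝ) 1) (j : ℤ) (k : ℕ) :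
    V (w (j + (k:ℤ) + 1)) - V (w j)
      = -∑ i ∈ Finset.range (k+1), gwb V w (j + (i:ℤ)) * (w (j + (i:ℤ) + 1) - w (j + (i:ℤ))) := by
  induction k with
  | zero =>
    norm_num [Finset.sum_range_one]
    rw [gw_bD hVmono hw01 j]
    ring
  | succ k ih =>
    rw [Finset.sum_range_succ, neg_add, ← ih]
    have h1 := gw_bD hVmono hw01 (j + (k:ℤ) + 1)
    push_cast
    rw [show j + ((k:ℤ) + 1) = j + (k:ℤ) + 1 by ring]
    rw [h1]
    ring

/-- The key Fubini/summation-by-parts identity. -/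
lemma gw_fubini1 (hL : 0 ≤ L)
    (hγnn : ∀ k, 0 ≤ γ k) (hγmono : ∀ k, γ (k+1) ≤ γ k) (hγsum : HasSum γ 1)
    (hconv : ∀ k, 2 * γ (k+1) ≤ γ k + γ (k+2))
    (hq : ∀ j, q j ∈ Set.Icc (0:ℝ) 1)
    (hbnn : ∀ c, 0 ≤ gwb V w c) (hbL : ∀ c, gwb V w c ≤ L)
    (hD1 : ∀ c : ℤ, |w (c+1) - w c| ≤ 1)
    (hVmono : ∀ x ∈ Set.Icc (0:ℝ) 1, ∀ y ∈ Set.Icc (0:ℝ) 1, x ≤ y → V y ≤ V x)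
    (hw01 : ∀ j, w j ∈ Set.Icc (0:ℝ) 1)
    (j : ℤ) :
    ∑' k : ℕ, gwg γ k * ((V (w (j + (k:ℤ) + 1)) - V (w j)) * (q (j + (k:ℤ) + 1) - q (j + (k:ℤ))))
    = -∑' i : ℕ, (gwb V w (j + (i:ℤ)) * (w (j + (i:ℤ) + 1) - w (j + (i:ℤ))))
        * (gwK γ q j i - gwg γ i * q (j + (i:ℤ))) := by
  classical
  set A : ℕ → ℝ := fun k => gwg γ k * (q (j + (k:ℤ) + 1) - q (j + (k:ℤ))) with hA
  set c : ℕ → ℝ := fun i => gwb V w (j + (i:ℤ)) * (w (j + (i:ℤ) + 1) - w (j + (i:ℤ))) with hc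
  set f : ℕ → ℕ → ℝ := fun i k => if i ≤ k then A k * c i else 0 with hf
  have Sγ := hγsum.summable
  have Sg : Summable (gwg γ) := by
    have := (gw_g_tail hγmono hγsum 0).summable
    simpa using this
  have hgnn := gw_g_nonneg hγmono
  have habsδ : ∀ c' : ℤ, |q (c' + 1) - q c'| ≤ 2 := by
    intro c'
    have h1 := (hq (c'+1)).1; have h2 := (hq (c'+1)).2
    have h3 := (hq c').1; have h4 := (hq c').2
    rw [abs_le]; constructor <;> linarith
  have habsA : ∀ k, |A k| ≤ gwg γ k * 2 := by
    intro k
    rw [hA, abs_mul, abs_of_nonneg (hgnn k)]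
    exact mul_le_mul_of_nonneg_left (habsδ _) (hgnn k)
  have habsc : ∀ i, |c i| ≤ L := by
    intro i
    rw [hc, abs_mul]
    calc |gwb V w (j + (i:ℤ))| * |w (j + (i:ℤ) + 1) - w (j + (i:ℤ))|
        ≤ L * 1 := by
          apply mul_le_mul _ (hD1 _) (abs_nonneg _) hL
          rw [abs_of_nonneg (hbnn _)]; exact hbL _
      _ = L := mul_one L
  have habsf : ∀ i k, |f i k| ≤ (if i ≤ k then gwg γ k else 0) * (2 * L) := by
    intro i k
    by_cases h : i ≤ k
    · simp only [hf, h, if_true]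
      rw [abs_mul]
      calc |A k| * |c i| ≤ (gwg γ k * 2) * L :=
            mul_le_mul (habsA k) (habsc i) (abs_nonneg _) (mul_nonneg (hgnn k) (by norm_num))
        _ = gwg γ k * (2 * L) := by ring
    · simp [hf, h]
  have hSif : ∀ i, Summable (fun k => (if i ≤ k then gwg γ k else 0)) := by
    intro i
    apply Summable.of_nonneg_of_le _ _ Sg
    · intro k; split <;> simp [hgnn k]
    · intro k; split
      · exact le_refl _
      · exact hgnn k
  have hSiftsum : ∀ i, (∑' k, (if i ≤ k then gwg γ k else 0)) = γ i := by
    intro i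
    rw [← Summable.sum_add_tsum_nat_add i (hSif i)]
    have h1 : ∑ k ∈ Finset.range i, (if i ≤ k then gwg γ k else 0) = 0 := by
      apply Finset.sum_eq_zero
      intro k hk
      rw [if_neg]
      exact Nat.not_le.mpr (Finset.mem_range.mp hk)
    have h2 : (∑' m : ℕ, (if i ≤ m + i then gwg γ (m+i) else 0)) = ∑' m : ℕ, gwg γ (m+i) := by
      apply tsum_congr; intro m
      rw [if_pos (Nat.le_add_left i m)]
    rw [h1, h2, zero_add, (gw_g_tail hγmono hγsum i).tsum_eq]
  have hSfabs_i : ∀ i, Summable (fun k => |f i k|) := by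
    intro i
    apply Summable.of_nonneg_of_le (fun k => abs_nonneg _) (habsf i) ((hSif i).mul_right _)
  have hSfi : ∀ i, Summable (f i) := fun i => summable_abs_iff.mp (hSfabs_i i)
  have hFsummable : Summable (fun p : ℕ × ℕ => f p.1 p.2) := by
    rw [← summable_abs_iff]
    rw [summable_prod_of_nonneg (fun p => abs_nonneg _)]
    constructor
    · exact fun i => hSfabs_i i
    · apply Summable.of_nonneg_of_le (fun i => tsum_nonneg (fun k => abs_nonneg _))
        (fun i => ?_) (Sγ.mul_right (2 * L))
      calc (∑' k, |f i k|) ≤ ∑' k, (if i ≤ k then gwg γ k else 0) * (2 * L) :=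
            Summable.tsum_le_tsum (habsf i) (hSfabs_i i) ((hSif i).mul_right _)
        _ = γ i * (2 * L) := by rw [tsum_mul_right, hSiftsum i]
  have hSfk : ∀ k, Summable (fun i => f i k) := by
    intro k
    apply summable_of_ne_finset_zero (s := Finset.range (k+1))
    intro i hi
    rw [hf]
    simp only
    rw [if_neg]
    intro h
    exact hi (Finset.mem_range.mpr (Nat.lt_succ_of_le h))
  -- step 1 : rewrite each k-term as a tsum over i
  have hstep1 : ∀ k : ℕ,
      gwg γ k * ((V (w (j + (k:ℤ) + 1)) - V (w j)) * (q (j + (k:ℤ) + 1) - q (j + (k:ℤ))))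
      = -∑' i : ℕ, f i k := by
    intro k
    rw [gw_vtel hVmono hw01 j k]
    have h1 : (∑' i : ℕ, f i k) = ∑ i ∈ Finset.range (k+1), A k * c i := by
      rw [tsum_eq_sum (s := Finset.range (k+1))]
      · apply Finset.sum_congr rfl
        intro i hi
        rw [hf]
        simp only
        rw [if_pos (Nat.lt_succ_iff.mp (Finset.mem_range.mp hi))]
      · intro i hi
        rw [hf]; simp only
        rw [if_neg (fun h => hi (Finset.mem_range.mpr (Nat.lt_succ_of_le h)))]
    rw [h1]
    have h2 : A k * (∑ i ∈ Finset.range (k+1), c i) = ∑ i ∈ Finset.range (k+1), A k * c i :=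
      Finset.mul_sum _ _ _
    rw [← h2]
    simp only [hA]
    ring
  have hcomm : ∑' k : ℕ, ∑' i : ℕ, f i k = ∑' i : ℕ, ∑' k : ℕ, f i k :=
    Summable.tsum_comm' hFsummable hSfi hSfk
  have hinner : ∀ i : ℕ, (∑' k, f i k) = c i * (gwK γ q j i - gwg γ i * q (j + (i:ℤ))) := by
    intro i
    have h1 : ∀ k, f i k = c i * (if i ≤ k then A k else 0) := by
      intro k
      rw [hf]
      simp only
      split <;> ring
    rw [tsum_congr h1, tsum_mul_left]
    congr 1
    have hSA : Summable (fun k => (if i ≤ k then A k else 0)) := by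
      apply Summable.of_norm_bounded (Sg.mul_right 2)
      intro k
      rw [Real.norm_eq_abs]
      split
      · exact habsA k
      · simpa using mul_nonneg (hgnn k) (by norm_num : (0:ℝ) ≤ 2)
    rw [← Summable.sum_add_tsum_nat_add i hSA]
    have hz : ∑ k ∈ Finset.range i, (if i ≤ k then A k else 0) = 0 := by
      apply Finset.sum_eq_zero
      intro k hk
      rw [if_neg (Nat.not_le.mpr (Finset.mem_range.mp hk))]
    have h2 : (∑' m : ℕ, (if i ≤ m + i then A (m+i) else 0)) = ∑' m : ℕ, A (m+i) :=
      tsum_congr (fun m => if_pos (Nat.le_add_left i m))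
    rw [hz, zero_add, h2]
    -- now compute the tail sum
    have habsq : ∀ c' : ℤ, |q c'| ≤ 1 := fun c' =>
      abs_le.mpr ⟨by linarith [(hq c').1], (hq c').2⟩
    have hs1 : Summable (fun m => gwg γ (m+i) * q (j + ((m+i:ℕ):ℤ) + 1)) :=
      gw_summable_mul (gw_g_tail hγmono hγsum i).summable (fun m => hgnn (m+i)) _
        (Cb := 1) (fun m => habsq _)
    have hs2 : Summable (fun m => gwg γ (m+i) * q (j + ((m+i:ℕ):ℤ))) :=
      gw_summable_mul (gw_g_tail hγmono hγsum i).summable (fun m => hgnn (m+i)) _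
        (Cb := 1) (fun m => habsq _)
    have hs3 : Summable (fun m => gwg γ (m+1+i) * q (j + ((m+1+i:ℕ):ℤ))) := by
      have := hs2.comp_injective (add_right_injective 1)
      apply this.congr
      intro m
      simp only [Function.comp]
      congr 2 <;> omega
    have hsplit : (∑' m, A (m+i))
        = (∑' m, gwg γ (m+i) * q (j + ((m+i:ℕ):ℤ) + 1))
          - ∑' m, gwg γ (m+i) * q (j + ((m+i:ℕ):ℤ)) := by
      rw [← Summable.tsum_sub hs1 hs2]
      apply tsum_congr
      intro m
      simp only [hA]
      ring
    have hzero : (∑' m, gwg γ (m+i) * q (j + ((m+i:ℕ):ℤ)))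
        = gwg γ i * q (j + (i:ℤ)) + ∑' m, gwg γ (m+1+i) * q (j + ((m+1+i:ℕ):ℤ)) := by
      rw [Summable.tsum_eq_zero_add hs2]
      congr 1
      norm_num
    have hKeq : (∑' m, gwg γ (m+i) * q (j + ((m+i:ℕ):ℤ) + 1))
          - (∑' m, gwg γ (m+1+i) * q (j + ((m+1+i:ℕ):ℤ))) = gwK γ q j i := by
      rw [← Summable.tsum_sub hs1 hs3, gwK]
      apply tsum_congr
      intro m
      have e1 : (((m+1+i:ℕ)):ℤ) = ((m+i:ℕ):ℤ) + 1 := by push_cast; ring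
      rw [e1, show j + (((m+i:ℕ)):ℤ) + 1 = j + (((m+i:ℕ)):ℤ) + 1 from rfl]
      have e2 : j + (((m+i:ℕ)):ℤ) + 1 = j + (i:ℤ) + (m:ℤ) + 1 := by push_cast; ring
      rw [show (j + ((((m+i:ℕ)):ℤ) + 1)) = j + (((m+i:ℕ)):ℤ) + 1 by ring, e2]
      have e3 : gwh γ (m+i) = gwg γ (m+i) - gwg γ (m+1+i) := by
        rw [gwh]
        congr 2
        omega
      rw [e3]
      ring
    rw [hsplit, hzero]
    linarith [hKeq]
  calc ∑' k : ℕ, gwg γ k * ((V (w (j + (k:ℤ) + 1)) - V (w j)) * (q (j + (k:ℤ) + 1) - q (j + (k:ℤ))))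
      = ∑' k : ℕ, -∑' i : ℕ, f i k := tsum_congr hstep1
    _ = -∑' k : ℕ, ∑' i : ℕ, f i k := tsum_neg
    _ = -∑' i : ℕ, ∑' k : ℕ, f i k := by rw [hcomm]
    _ = -∑' i : ℕ, (gwb V w (j + (i:ℤ)) * (w (j + (i:ℤ) + 1) - w (j + (i:ℤ))))
          * (gwK γ q j i - gwg γ i * q (j + (i:ℤ))) := by
        rw [tsum_congr hinner]
end

/-- flux difference -/
noncomputable def gwφ (V : ℝ → ℝ) (q w : ℤ → ℝ) (c : ℤ) : ℝ :=
  q (c+1) * V (w (c+1+1)) - q c * V (w (c+1))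

section
variable {lam M L : ℝ} {V : ℝ → ℝ} {γ : ℕ → ℝ} {q w : ℤ → ℝ}

lemma gw_diff_sum (hγnn : ∀ k, 0 ≤ γ k) (hγsum : HasSum γ 1)
    {u : ℤ → ℝ} {Cb : ℝ} (hub : ∀ c, |u c| ≤ Cb) (j : ℤ) :
    (∑' k : ℕ, γ k * u ((j+1) + (k:ℤ))) - (∑' k : ℕ, γ k * u (j + (k:ℤ)))
      = ∑' k : ℕ, γ k * (u (j + (k:ℤ) + 1) - u (j + (k:ℤ))) := by
  have hs1 : Summable (fun k : ℕ => γ k * u (j + (k:ℤ) + 1)) := by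
    have := gw_summable_mul hγsum.summable hγnn (fun k : ℕ => u ((j+1) + (k:ℤ))) (hX := fun k => hub _)
    apply this.congr
    intro k; congr 1; ring
  have hs2 : Summable (fun k : ℕ => γ k * u (j + (k:ℤ))) :=
    gw_summable_mul hγsum.summable hγnn _ (hX := fun k => hub _)
  have e1 : (∑' k : ℕ, γ k * u ((j+1) + (k:ℤ))) = ∑' k : ℕ, γ k * u (j + (k:ℤ) + 1) :=
    tsum_congr (fun k => by rw [show (j+1) + (k:ℤ) = j + (k:ℤ) + 1 by ring])
  rw [e1, ← Summable.tsum_sub hs1 hs2]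
  exact tsum_congr (fun k => by ring)

/-- The row decomposition identity. -/
lemma gw_row (hlam : 0 < lam) (hM : 0 ≤ M) (hL : 0 ≤ L)
    (hVlip : ∀ x y : ℝ, |V x - V y| ≤ L * |x - y|)
    (hVmono : ∀ x ∈ Set.Icc (0:ℝ) 1, ∀ y ∈ Set.Icc (0:ℝ) 1, x ≤ y → V y ≤ V x)
    (hVbd : ∀ ξ ∈ Set.Icc (0:ℝ) 1, V ξ ∈ Set.Icc (0:ℝ) M)
    (hγnn : ∀ k, 0 ≤ γ k) (hγmono : ∀ k, γ (k+1) ≤ γ k) (hγsum : HasSum γ 1)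
    (hconv : ∀ k, 2 * γ (k+1) ≤ γ k + γ (k+2))
    (hq : ∀ j, q j ∈ Set.Icc (0:ℝ) 1)
    (hw : ∀ j, w j = ∑' k : ℕ, γ k * q (j + (k:ℤ)))
    (r : ℤ → ℝ)
    (hr : ∀ i, r i = q i + lam * (q (i-1) * V (w i) - q i * V (w (i+1))))
    (j : ℤ) :
    (∑' k : ℕ, γ k * r ((j+1) + (k:ℤ))) - (∑' k : ℕ, γ k * r (j + (k:ℤ)))
    = (1 - lam * V (w j) - lam * gwb V w j * ((γ 0 + gwg γ 0) * q j - gwK γ q j 0)) * (w (j+1) - w j)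
      + lam * V (w j) * (w j - w (j-1))
      + lam * ∑' s : ℕ, (gwb V w (j + (s:ℤ) + 1) * gwK γ q j s)
          * (w (j + (s:ℤ) + 1 + 1) - w (j + (s:ℤ) + 1)) := by
  have hw01 := gw_w_mem hγnn hγsum hq hw
  have habsq : ∀ c : ℤ, |q c| ≤ 1 := fun c => abs_le.mpr ⟨by linarith [(hq c).1], (hq c).2⟩
  have hvM : ∀ c : ℤ, |V (w c)| ≤ M := by
    intro c
    have h := hVbd (w c) (hw01 c)
    exact abs_le.mpr ⟨by linarith [h.1], h.2⟩
  have hD1 : ∀ c : ℤ, |w (c+1) - w c| ≤ 1 := by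
    intro c
    have h1 := (hw01 (c+1)).1; have h2 := (hw01 (c+1)).2
    have h3 := (hw01 c).1; have h4 := (hw01 c).2
    rw [abs_le]; constructor <;> linarith
  have hbnn : ∀ c, 0 ≤ gwb V w c := gw_b_nonneg hVmono hw01
  have hbL : ∀ c, gwb V w c ≤ L := fun c => gw_b_le hL hVlip c
  have hgnn := gw_g_nonneg hγmono
  have Sγ := hγsum.summable
  have Sg : Summable (gwg γ) := by simpa using (gw_g_tail hγmono hγsum 0).summable
  have hφb : ∀ c : ℤ, |gwφ V q w c| ≤ 2*M := by
    intro c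
    rw [gwφ]
    have h1 : |q (c+1) * V (w (c+1+1))| ≤ M := by
      rw [abs_mul]
      calc |q (c+1)| * |V (w (c+1+1))| ≤ 1 * M :=
        mul_le_mul (habsq _) (hvM _) (abs_nonneg _) zero_le_one
      _ = M := one_mul M
    have h2 : |q c * V (w (c+1))| ≤ M := by
      rw [abs_mul]
      calc |q c| * |V (w (c+1))| ≤ 1 * M :=
        mul_le_mul (habsq _) (hvM _) (abs_nonneg _) zero_le_one
      _ = M := one_mul M
    calc |q (c+1) * V (w (c+1+1)) - q c * V (w (c+1))|
        ≤ |q (c+1) * V (w (c+1+1))| + |q c * V (w (c+1))| := abs_sub _ _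
      _ ≤ 2*M := by linarith
  have hrb : ∀ c : ℤ, |r c| ≤ 1 + lam*(2*M) := by
    intro c
    rw [hr c]
    have h1 := abs_add_le (q c) (lam * (q (c-1) * V (w c) - q c * V (w (c+1))))
    have h2 : |lam * (q (c-1) * V (w c) - q c * V (w (c+1)))|
        = lam * |q (c-1) * V (w c) - q c * V (w (c+1))| := by
      rw [abs_mul, abs_of_nonneg hlam.le]
    have h3 := abs_sub (q (c-1) * V (w c)) (q c * V (w (c+1)))
    have h4 : |q (c-1) * V (w c)| ≤ M := by
      rw [abs_mul]
      calc |q (c-1)| * |V (w c)| ≤ 1 * M :=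
        mul_le_mul (habsq _) (hvM _) (abs_nonneg _) zero_le_one
      _ = M := one_mul M
    have h5 : |q c * V (w (c+1))| ≤ M := by
      rw [abs_mul]
      calc |q c| * |V (w (c+1))| ≤ 1 * M :=
        mul_le_mul (habsq _) (hvM _) (abs_nonneg _) zero_le_one
      _ = M := one_mul M
    have h6 := habsq c
    nlinarith [abs_nonneg (q (c-1) * V (w c) - q c * V (w (c+1)))]
  -- step 1: difference of r-averages
  have hstep1 : (∑' k : ℕ, γ k * r ((j+1) + (k:ℤ))) - (∑' k : ℕ, γ k * r (j + (k:ℤ)))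
      = ∑' k : ℕ, γ k * (r (j + (k:ℤ) + 1) - r (j + (k:ℤ))) :=
    gw_diff_sum hγnn hγsum hrb j
  -- step 2: pointwise flux form
  have hstep2 : ∀ c : ℤ, r (c+1) - r c
      = (q (c+1) - q c) - lam * (gwφ V q w c - gwφ V q w (c-1)) := by
    intro c
    rw [hr (c+1), hr c]
    simp only [gwφ]
    rw [show c+1-1 = c by ring, show c-1+1 = c by ring]
    ring
  -- summabilities
  have Sδ : Summable (fun k : ℕ => γ k * (q (j + (k:ℤ) + 1) - q (j + (k:ℤ)))) := by
    apply gw_summable_mul Sγ hγnn _ (Cb := 2)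
    intro k
    have := habsq (j + (k:ℤ) + 1); have := habsq (j + (k:ℤ))
    rw [abs_le] at *
    constructor <;> [linarith [(abs_le.mp (habsq (j+(k:ℤ)+1))).1, (abs_le.mp (habsq (j+(k:ℤ)))).2];
      linarith [(abs_le.mp (habsq (j+(k:ℤ)+1))).2, (abs_le.mp (habsq (j+(k:ℤ)))).1]]
  have Sφ1 : Summable (fun k : ℕ => γ k * gwφ V q w (j + (k:ℤ))) :=
    gw_summable_mul Sγ hγnn _ (hX := fun k => hφb _)
  have Sφ2 : Summable (fun k : ℕ => γ k * gwφ V q w (j + (k:ℤ) - 1)) :=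
    gw_summable_mul Sγ hγnn _ (hX := fun k => hφb _)
  have Sφ1' : Summable (fun k : ℕ => γ (k+1) * gwφ V q w (j + (k:ℤ))) :=
    gw_summable_mul ((summable_nat_add_iff 1).mpr Sγ) (fun k => hγnn (k+1)) _
      (hX := fun k => hφb _)
  -- (*) the "star" identity
  have hstar : (∑' k : ℕ, γ k * r ((j+1) + (k:ℤ))) - (∑' k : ℕ, γ k * r (j + (k:ℤ)))
      = (∑' k : ℕ, γ k * (q (j + (k:ℤ) + 1) - q (j + (k:ℤ))))
        + lam * (γ 0 * gwφ V q w (j-1))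
        - lam * ∑' k : ℕ, gwg γ k * gwφ V q w (j + (k:ℤ)) := by
    rw [hstep1]
    have e : ∀ k : ℕ, γ k * (r (j + (k:ℤ) + 1) - r (j + (k:ℤ)))
        = γ k * (q (j + (k:ℤ) + 1) - q (j + (k:ℤ)))
          - lam * (γ k * gwφ V q w (j + (k:ℤ)))
          + lam * (γ k * gwφ V q w (j + (k:ℤ) - 1)) := by
      intro k
      rw [hstep2 (j + (k:ℤ))]
      ring
    rw [tsum_congr e]
    rw [Summable.tsum_add (Sδ.sub (Sφ1.mul_left lam)) (Sφ2.mul_left lam),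
        Summable.tsum_sub Sδ (Sφ1.mul_left lam), tsum_mul_left, tsum_mul_left]
    have hC : (∑' k : ℕ, γ k * gwφ V q w (j + (k:ℤ) - 1))
        = γ 0 * gwφ V q w (j-1) + ∑' k : ℕ, γ (k+1) * gwφ V q w (j + (k:ℤ)) := by
      rw [Summable.tsum_eq_zero_add Sφ2]
      congr 1
      · norm_num
      · apply tsum_congr
        intro k
        congr 2
        push_cast
        ring
    rw [hC]
    have hgsub : (∑' k : ℕ, gwg γ k * gwφ V q w (j + (k:ℤ)))
        = (∑' k : ℕ, γ k * gwφ V q w (j + (k:ℤ)))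
          - ∑' k : ℕ, γ (k+1) * gwφ V q w (j + (k:ℤ)) := by
      rw [← Summable.tsum_sub Sφ1 Sφ1']
      exact tsum_congr (fun k => by rw [gwg]; ring)
    rw [hgsub]
    ring
  -- pointwise expansion of the flux difference
  have hφexp : ∀ c : ℤ, gwφ V q w c
      = V (w (c+1)) * (q (c+1) - q c)
        - (gwb V w (c+1) * (w (c+1+1) - w (c+1))) * q (c+1) := by
    intro c
    have h := gw_bD hVmono hw01 (c+1)
    rw [gwφ]
    linear_combination (q (c+1)) * h
  have habsbDq : ∀ c : ℤ, |(gwb V w c * (w (c+1) - w c)) * q c| ≤ L := by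
    intro c
    rw [abs_mul, abs_mul]
    calc |gwb V w c| * |w (c+1) - w c| * |q c| ≤ L * 1 * 1 := by
          apply mul_le_mul _ (habsq c) (abs_nonneg _) (by nlinarith [hD1 c, abs_nonneg (gwb V w c)])
          apply mul_le_mul _ (hD1 c) (abs_nonneg _) hL
          rw [abs_of_nonneg (hbnn c)]
          exact hbL c
      _ = L := by ring
  have SbDq : Summable (fun k : ℕ => gwg γ k
      * ((gwb V w (j + (k:ℤ) + 1) * (w (j + (k:ℤ) + 1 + 1) - w (j + (k:ℤ) + 1))) * q (j + (k:ℤ) + 1))) :=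
    gw_summable_mul Sg hgnn _ (hX := fun k => habsbDq (j + (k:ℤ) + 1))
  have habsδ2 : ∀ c : ℤ, |q (c + 1) - q c| ≤ 2 := by
    intro c
    have h1 := abs_le.mp (habsq (c+1))
    have h2 := abs_le.mp (habsq c)
    rw [abs_le]
    constructor <;> [linarith [h1.1, h2.2]; linarith [h1.2, h2.1]]
  have SVδ : Summable (fun k : ℕ => gwg γ k
      * (V (w (j + (k:ℤ) + 1)) * (q (j + (k:ℤ) + 1) - q (j + (k:ℤ))))) := by
    apply gw_summable_mul Sg hgnn _ (Cb := M * 2)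
    intro k
    rw [abs_mul]
    exact mul_le_mul (hvM _) (habsδ2 _) (abs_nonneg _) hM
  have SVδd : Summable (fun k : ℕ => gwg γ k
      * ((V (w (j + (k:ℤ) + 1)) - V (w j)) * (q (j + (k:ℤ) + 1) - q (j + (k:ℤ))))) := by
    apply gw_summable_mul Sg hgnn _ (Cb := (2*M) * 2)
    intro k
    rw [abs_mul]
    apply mul_le_mul _ (habsδ2 _) (abs_nonneg _) (by linarith)
    calc |V (w (j + (k:ℤ) + 1)) - V (w j)| ≤ |V (w (j + (k:ℤ) + 1))| + |V (w j)| := abs_sub _ _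
      _ ≤ 2*M := by linarith [hvM (j + (k:ℤ) + 1), hvM j]
  have Sgδ : Summable (fun k : ℕ => gwg γ k * (q (j + (k:ℤ) + 1) - q (j + (k:ℤ)))) :=
    gw_summable_mul Sg hgnn _ (hX := fun k => habsδ2 _)
  have hsplit7 : (∑' k : ℕ, gwg γ k * gwφ V q w (j + (k:ℤ)))
      = (∑' k : ℕ, gwg γ k * (V (w (j + (k:ℤ) + 1)) * (q (j + (k:ℤ) + 1) - q (j + (k:ℤ)))))
        - ∑' k : ℕ, gwg γ k * ((gwb V w (j + (k:ℤ) + 1)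
            * (w (j + (k:ℤ) + 1 + 1) - w (j + (k:ℤ) + 1))) * q (j + (k:ℤ) + 1)) := by
    rw [← Summable.tsum_sub SVδ SbDq]
    apply tsum_congr
    intro k
    rw [hφexp (j + (k:ℤ))]
    ring
  have hsplit8 : (∑' k : ℕ, gwg γ k * (V (w (j + (k:ℤ) + 1)) * (q (j + (k:ℤ) + 1) - q (j + (k:ℤ)))))
      = V (w j) * (∑' k : ℕ, gwg γ k * (q (j + (k:ℤ) + 1) - q (j + (k:ℤ))))
        + ∑' k : ℕ, gwg γ k * ((V (w (j + (k:ℤ) + 1)) - V (w j)) * (q (j + (k:ℤ) + 1) - q (j + (k:ℤ)))) := by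
    rw [← tsum_mul_left, ← Summable.tsum_add (Sgδ.mul_left (V (w j))) SVδd]
    apply tsum_congr
    intro k
    ring
  have hI1 : (∑' k : ℕ, gwg γ k * (q (j + (k:ℤ) + 1) - q (j + (k:ℤ))))
      = γ 0 * (q j - q (j-1)) - (w j - w (j-1)) + (w (j+1) - w j) := by
    have h2 := gw_I2 hγnn hγsum hq hw j
    have h1 := gw_I2 hγnn hγsum hq hw (j-1)
    rw [show j - 1 + 1 = j by ring] at h1
    have h1' : w j - w (j-1) = (∑' k : ℕ, gwg γ k * q (j + (k:ℤ))) - γ 0 * q (j-1) := by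
      rw [h1]
      congr 1
      apply tsum_congr
      intro k
      rw [gwg, show j - 1 + (k:ℤ) + 1 = j + (k:ℤ) by ring]
    have h2' : w (j+1) - w j = (∑' k : ℕ, gwg γ k * q (j + (k:ℤ) + 1)) - γ 0 * q j := by
      rw [h2]
      congr 1
    have hs1 : Summable (fun k : ℕ => gwg γ k * q (j + (k:ℤ) + 1)) :=
      gw_summable_mul Sg hgnn _ (hX := fun k => habsq _)
    have hs2 : Summable (fun k : ℕ => gwg γ k * q (j + (k:ℤ))) :=
      gw_summable_mul Sg hgnn _ (hX := fun k => habsq _)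
    have h3 : (∑' k : ℕ, gwg γ k * (q (j + (k:ℤ) + 1) - q (j + (k:ℤ))))
        = (∑' k : ℕ, gwg γ k * q (j + (k:ℤ) + 1)) - ∑' k : ℕ, gwg γ k * q (j + (k:ℤ)) := by
      rw [← Summable.tsum_sub hs1 hs2]
      exact tsum_congr (fun k => by ring)
    rw [h3]
    linarith [h1', h2']
  have hfub := gw_fubini1 hL hγnn hγmono hγsum hconv hq hbnn hbL hD1 hVmono hw01 j
  have habsKgq : ∀ i : ℕ, ∀ c : ℤ, |gwK γ q j i - gwg γ i * q c| ≤ 2 * gwg γ i := by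
    intro i c
    have h1 := gw_K_nonneg hconv hq j i
    have h2 := gw_K_le hconv hγsum hq j i
    have h3 : 0 ≤ gwg γ i * q c := mul_nonneg (hgnn i) (hq c).1
    have h4 : gwg γ i * q c ≤ gwg γ i := by nlinarith [(hq c).2, hgnn i]
    rw [abs_le]
    constructor <;> nlinarith
  have SX : Summable (fun i : ℕ => (gwb V w (j + (i:ℤ)) * (w (j + (i:ℤ) + 1) - w (j + (i:ℤ))))
      * (gwK γ q j i - gwg γ i * q (j + (i:ℤ)))) := by
    apply Summable.of_norm_bounded ((Sg.mul_left 2).mul_left L)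
    intro i
    rw [Real.norm_eq_abs, abs_mul]
    have h1 : |gwb V w (j + (i:ℤ)) * (w (j + (i:ℤ) + 1) - w (j + (i:ℤ)))| ≤ L := by
      rw [abs_mul]
      calc |gwb V w (j + (i:ℤ))| * |w (j + (i:ℤ) + 1) - w (j + (i:ℤ))| ≤ L * 1 := by
            apply mul_le_mul _ (hD1 _) (abs_nonneg _) hL
            rw [abs_of_nonneg (hbnn _)]
            exact hbL _
        _ = L := mul_one L
    exact mul_le_mul h1 (habsKgq i _) (abs_nonneg _) hL
  have Stail : Summable (fun i : ℕ => (gwb V w (j + (i:ℤ) + 1)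
      * (w (j + (i:ℤ) + 1 + 1) - w (j + (i:ℤ) + 1)))
      * (gwK γ q j (i+1) - gwg γ (i+1) * q (j + (i:ℤ) + 1))) := by
    apply Summable.of_norm_bounded
      ((((summable_nat_add_iff 1).mpr Sg).mul_left 2).mul_left L)
    intro i
    rw [Real.norm_eq_abs, abs_mul]
    have h1 : |gwb V w (j + (i:ℤ) + 1) * (w (j + (i:ℤ) + 1 + 1) - w (j + (i:ℤ) + 1))| ≤ L := by
      rw [abs_mul]
      calc |gwb V w (j + (i:ℤ) + 1)| * |w (j + (i:ℤ) + 1 + 1) - w (j + (i:ℤ) + 1)| ≤ L * 1 := by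
            apply mul_le_mul _ (hD1 _) (abs_nonneg _) hL
            rw [abs_of_nonneg (hbnn _)]
            exact hbL _
        _ = L := mul_one L
    exact mul_le_mul h1 (habsKgq (i+1) _) (abs_nonneg _) hL
  have hXsplit : (∑' i : ℕ, (gwb V w (j + (i:ℤ)) * (w (j + (i:ℤ) + 1) - w (j + (i:ℤ))))
        * (gwK γ q j i - gwg γ i * q (j + (i:ℤ))))
      = (gwb V w j * (w (j + 1) - w j)) * (gwK γ q j 0 - gwg γ 0 * q j)
        + ∑' i : ℕ, (gwb V w (j + (i:ℤ) + 1) * (w (j + (i:ℤ) + 1 + 1) - w (j + (i:ℤ) + 1)))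
            * (gwK γ q j (i+1) - gwg γ (i+1) * q (j + (i:ℤ) + 1)) := by
    rw [Summable.tsum_eq_zero_add SX]
    congr 1
    · norm_num
    · apply tsum_congr
      intro i
      rw [(show ((i+1:ℕ):ℤ) = (i:ℤ)+1 by push_cast; ring),
        (show j + ((i:ℤ)+1) = j + (i:ℤ) + 1 by ring)]
  have hcomb : (∑' i : ℕ, (gwb V w (j + (i:ℤ) + 1) * (w (j + (i:ℤ) + 1 + 1) - w (j + (i:ℤ) + 1)))
        * (gwK γ q j (i+1) - gwg γ (i+1) * q (j + (i:ℤ) + 1)))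
      + (∑' k : ℕ, gwg γ k * ((gwb V w (j + (k:ℤ) + 1)
          * (w (j + (k:ℤ) + 1 + 1) - w (j + (k:ℤ) + 1))) * q (j + (k:ℤ) + 1)))
      = ∑' s : ℕ, (gwb V w (j + (s:ℤ) + 1) * gwK γ q j s)
          * (w (j + (s:ℤ) + 1 + 1) - w (j + (s:ℤ) + 1)) := by
    rw [← Summable.tsum_add Stail SbDq]
    apply tsum_congr
    intro k
    rw [gw_K_rec hconv hγsum hq j k]
    simp only [gwh]
    ring
  have hφ1 : gwφ V q w (j-1)
      = V (w j) * (q j - q (j-1)) - (gwb V w j * (w (j+1) - w j)) * q j := by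
    have h := hφexp (j-1)
    rw [show j - 1 + 1 = j by ring] at h
    exact h
  have hA0 : (∑' k : ℕ, γ k * (q (j + (k:ℤ) + 1) - q (j + (k:ℤ)))) = w (j+1) - w j := by
    have h := gw_diff_sum hγnn hγsum habsq j
    rw [← h, ← hw (j+1), ← hw j]
  rw [hstar, hsplit7, hsplit8, hfub, hXsplit, hI1, hφ1, hA0, ← hcomb]
  ring

end

section
variable {lam M L : ℝ} {V : ℝ → ℝ} {γ : ℕ → ℝ} {q w : ℤ → ℝ}

lemma gw_col (hM : 0 ≤ M) (hL : 0 ≤ L)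
    (hVmono : ∀ x ∈ Set.Icc (0:ℝ) 1, ∀ y ∈ Set.Icc (0:ℝ) 1, x ≤ y → V y ≤ V x)
    (hγnn : ∀ k, 0 ≤ γ k) (hγmono : ∀ k, γ (k+1) ≤ γ k) (hγsum : HasSum γ 1)
    (hconv : ∀ k, 2 * γ (k+1) ≤ γ k + γ (k+2))
    (hq : ∀ j, q j ∈ Set.Icc (0:ℝ) 1)
    (hw : ∀ j, w j = ∑' k : ℕ, γ k * q (j + (k:ℤ))) (j : ℤ) :
    lam * V (w (j+1))
      + (1 - lam * V (w j) - lam * gwb V w j * ((γ 0 + gwg γ 0) * q j - gwK γ q j 0))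
      + lam * (gwb V w j * ∑' s : ℕ, ∑' m : ℕ, gwh γ (m+s) * q (j + (m:ℤ))) = 1 := by
  have hw01 := gw_w_mem hγnn hγsum hq hw
  have hbDj := gw_bD hVmono hw01 j
  have hhnn := gw_h_nonneg hconv
  have hgnn := gw_g_nonneg hγmono
  have Sg : Summable (gwg γ) := by simpa using (gw_g_tail hγmono hγsum 0).summable
  have habsq : ∀ c : ℤ, |q c| ≤ 1 := fun c => abs_le.mpr ⟨by linarith [(hq c).1], (hq c).2⟩
  -- Fubini for the double sum
  have hShm : ∀ m : ℕ, Summable (fun s : ℕ => gwh γ (m+s)) := by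
    intro m
    apply ((gw_h_tail hconv hγsum m).summable).congr
    intro s
    congr 1
    omega
  have hStailm : ∀ m : ℕ, (∑' s : ℕ, gwh γ (m+s)) = gwg γ m := by
    intro m
    rw [← (gw_h_tail hconv hγsum m).tsum_eq]
    exact tsum_congr (fun s => by congr 1; omega)
  have hSsm : ∀ s : ℕ, Summable (fun m : ℕ => gwh γ (m+s) * q (j + (m:ℤ))) := by
    intro s
    exact gw_summable_mul (gw_h_tail hconv hγsum s).summable (fun m => hhnn (m+s)) _
      (hX := fun m => habsq _)
  have hFsum : Summable (fun p : ℕ × ℕ => gwh γ (p.2 + p.1) * q (j + (p.2:ℤ))) := by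
    rw [summable_prod_of_nonneg (fun p => mul_nonneg (hhnn _) (hq _).1)]
    constructor
    · exact fun s => hSsm s
    · apply Summable.of_nonneg_of_le (fun s => tsum_nonneg (fun m => mul_nonneg (hhnn _) (hq _).1))
        (fun s => ?_) Sg
      calc (∑' m : ℕ, gwh γ (m+s) * q (j + (m:ℤ))) ≤ ∑' m : ℕ, gwh γ (m+s) := by
            apply Summable.tsum_le_tsum _ (hSsm s) (gw_h_tail hconv hγsum s).summable
            intro m
            nlinarith [(hq (j + (m:ℤ))).2, hhnn (m+s), (hq (j + (m:ℤ))).1]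
        _ = gwg γ s := (gw_h_tail hconv hγsum s).tsum_eq
  have hfub2 : (∑' s : ℕ, ∑' m : ℕ, gwh γ (m+s) * q (j + (m:ℤ)))
      = ∑' m : ℕ, gwg γ m * q (j + (m:ℤ)) := by
    have h1 := Summable.tsum_comm' (f := fun (s m : ℕ) => gwh γ (m+s) * q (j + (m:ℤ))) hFsum
      (fun s => hSsm s) (fun m => (hShm m).mul_right _)
    rw [h1.symm]
    apply tsum_congr
    intro m
    rw [tsum_mul_right, hStailm m]
  -- splitting the sums
  have Sgq1 : Summable (fun m : ℕ => gwg γ m * q (j + (m:ℤ) + 1)) :=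
    gw_summable_mul Sg hgnn _ (hX := fun m => habsq _)
  have Sgq0 : Summable (fun m : ℕ => gwg γ m * q (j + (m:ℤ))) :=
    gw_summable_mul Sg hgnn _ (hX := fun m => habsq _)
  have Sgq1' : Summable (fun m : ℕ => gwg γ (m+1) * q (j + (m:ℤ) + 1)) :=
    gw_summable_mul ((summable_nat_add_iff 1).mpr Sg) (fun m => hgnn (m+1)) _
      (hX := fun m => habsq _)
  have hS0 : (∑' m : ℕ, gwg γ m * q (j + (m:ℤ)))
      = gwg γ 0 * q j + ∑' m : ℕ, gwg γ (m+1) * q (j + (m:ℤ) + 1) := by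
    rw [Summable.tsum_eq_zero_add Sgq0]
    congr 1
    · norm_num
    · apply tsum_congr
      intro m
      congr 2
      push_cast
      ring
  have hK0 : gwK γ q j 0
      = (∑' m : ℕ, gwg γ m * q (j + (m:ℤ) + 1)) - ∑' m : ℕ, gwg γ (m+1) * q (j + (m:ℤ) + 1) := by
    rw [gwK, ← Summable.tsum_sub Sgq1 Sgq1']
    apply tsum_congr
    intro m
    simp only [Nat.add_zero, Nat.cast_zero, add_zero]
    rw [gwh, gwg, gwg]
    ring
  have hI2' : w (j+1) - w j = (∑' m : ℕ, gwg γ m * q (j + (m:ℤ) + 1)) - γ 0 * q j := by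
    rw [gw_I2 hγnn hγsum hq hw j]
    congr 1
  rw [hfub2, hS0, hK0]
  linear_combination lam * hbDj - lam * gwb V w j * hI2'
end

section
variable {lam M L : ℝ} {V : ℝ → ℝ} {γ : ℕ → ℝ} {q w : ℤ → ℝ}

lemma gw_step (hlam : 0 < lam) (hM : 0 ≤ M) (hL : 0 ≤ L)
    (hVlip : ∀ x y : ℝ, |V x - V y| ≤ L * |x - y|)
    (hVmono : ∀ x ∈ Set.Icc (0:ℝ) 1, ∀ y ∈ Set.Icc (0:ℝ) 1, x ≤ y → V y ≤ V x)
    (hVbd : ∀ ξ ∈ Set.Icc (0:ℝ) 1, V ξ ∈ Set.Icc (0:ℝ) M)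
    (hγnn : ∀ k, 0 ≤ γ k) (hγmono : ∀ k, γ (k+1) ≤ γ k) (hγsum : HasSum γ 1)
    (hconv : ∀ k, 2 * γ (k+1) ≤ γ k + γ (k+2))
    (hCFL : lam * (M + 2*L) ≤ 1)
    (hq : ∀ j, q j ∈ Set.Icc (0:ℝ) 1)
    (hw : ∀ j, w j = ∑' k : ℕ, γ k * q (j + (k:ℤ)))
    (r w' : ℤ → ℝ)
    (hr : ∀ i, r i = q i + lam * (q (i-1) * V (w i) - q i * V (w (i+1))))
    (hw' : ∀ j, w' j = ∑' k : ℕ, γ k * r (j + (k:ℤ))) :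
    ∑' j : ℤ, ENNReal.ofReal |w' (j+1) - w' j| ≤ ∑' j : ℤ, ENNReal.ofReal |w (j+1) - w j| := by
  classical
  have hw01 := gw_w_mem hγnn hγsum hq hw
  have hγ0 : γ 0 ≤ 1 := gw_gamma0_le_one hγnn hγsum
  have hgnn := gw_g_nonneg hγmono
  have hhnn := gw_h_nonneg hconv
  have hg0le : gwg γ 0 ≤ γ 0 := gw_g_le hγnn 0
  have Sg : Summable (gwg γ) := by simpa using (gw_g_tail hγmono hγsum 0).summable
  have habsq : ∀ c : ℤ, |q c| ≤ 1 := fun c => abs_le.mpr ⟨by linarith [(hq c).1], (hq c).2⟩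
  have hvb : ∀ c : ℤ, V (w c) ∈ Set.Icc (0:ℝ) M := fun c => hVbd _ (hw01 c)
  have hbnn : ∀ c, 0 ≤ gwb V w c := gw_b_nonneg hVmono hw01
  have hbL : ∀ c, gwb V w c ≤ L := fun c => gw_b_le hL hVlip c
  have hD1 : ∀ c : ℤ, |w (c+1) - w c| ≤ 1 := by
    intro c
    have h1 := (hw01 (c+1)).1; have h2 := (hw01 (c+1)).2
    have h3 := (hw01 c).1; have h4 := (hw01 c).2
    rw [abs_le]; constructor <;> linarith
  have hKnn : ∀ j s, 0 ≤ gwK γ q j s := gw_K_nonneg hconv hq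
  have hKle : ∀ j s, gwK γ q j s ≤ gwg γ s := gw_K_le hconv hγsum hq
  -- coefficient bounds
  set B : ℤ → ℝ := fun j =>
    1 - lam * V (w j) - lam * gwb V w j * ((γ 0 + gwg γ 0) * q j - gwK γ q j 0) with hB
  have hBnn : ∀ j, 0 ≤ B j := by
    intro j
    have h1 := (hvb j).2
    have h2 := hbnn j
    have h3 := hbL j
    have h4 : (γ 0 + gwg γ 0) * q j - gwK γ q j 0 ≤ 2 := by
      nlinarith [(hq j).2, (hq j).1, hKnn j 0, hγ0, hg0le, hγnn 0]
    have h5 : gwb V w j * ((γ 0 + gwg γ 0) * q j - gwK γ q j 0) ≤ 2 * L := by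
      rcases le_or_gt 0 ((γ 0 + gwg γ 0) * q j - gwK γ q j 0) with h | h
      · nlinarith
      · nlinarith
    have h6 := (hvb j).1
    simp only [hB]
    nlinarith
  have hCnn : ∀ (j : ℤ) (s : ℕ), 0 ≤ gwb V w (j + (s:ℤ) + 1) * gwK γ q j s :=
    fun j s => mul_nonneg (hbnn _) (hKnn j s)
  have hCle : ∀ (j : ℤ) (s : ℕ), gwb V w (j + (s:ℤ) + 1) * gwK γ q j s ≤ L * gwg γ s := by
    intro j s
    have := hbL (j + (s:ℤ) + 1)
    have := hbnn (j + (s:ℤ) + 1)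
    nlinarith [hKnn j s, hKle j s, gw_g_nonneg hγmono s]
  -- the real row inequality
  have hrow : ∀ j : ℤ, |w' (j+1) - w' j|
      ≤ B j * |w (j+1) - w j| + lam * V (w j) * |w j - w (j-1)|
        + lam * ∑' s : ℕ, (gwb V w (j + (s:ℤ) + 1) * gwK γ q j s)
            * |w (j + (s:ℤ) + 1 + 1) - w (j + (s:ℤ) + 1)| := by
    intro j
    have hRid : w' (j+1) - w' j
        = B j * (w (j+1) - w j) + lam * V (w j) * (w j - w (j-1))
          + lam * ∑' s : ℕ, (gwb V w (j + (s:ℤ) + 1) * gwK γ q j s)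
              * (w (j + (s:ℤ) + 1 + 1) - w (j + (s:ℤ) + 1)) := by
      rw [hw' (j+1), hw' j]
      exact gw_row hlam hM hL hVlip hVmono hVbd hγnn hγmono hγsum hconv hq hw r hr j
    have hSCD : Summable (fun s : ℕ => (gwb V w (j + (s:ℤ) + 1) * gwK γ q j s)
        * |w (j + (s:ℤ) + 1 + 1) - w (j + (s:ℤ) + 1)|) := by
      apply Summable.of_norm_bounded (Sg.mul_left L)
      intro s
      rw [Real.norm_eq_abs, abs_mul, abs_abs, abs_of_nonneg (hCnn j s)]
      calc (gwb V w (j + (s:ℤ) + 1) * gwK γ q j s) * |w (j + (s:ℤ) + 1 + 1) - w (j + (s:ℤ) + 1)|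
          ≤ (L * gwg γ s) * 1 := by
            apply mul_le_mul (hCle j s) (hD1 _) (abs_nonneg _)
            nlinarith [gw_g_nonneg hγmono s]
        _ = L * gwg γ s := mul_one _
    have hSCDs : Summable (fun s : ℕ => (gwb V w (j + (s:ℤ) + 1) * gwK γ q j s)
        * (w (j + (s:ℤ) + 1 + 1) - w (j + (s:ℤ) + 1))) := by
      apply Summable.of_norm_bounded hSCD
      intro s
      rw [Real.norm_eq_abs, abs_mul, abs_of_nonneg (hCnn j s)]
    have habs3 : |lam * ∑' s : ℕ, (gwb V w (j + (s:ℤ) + 1) * gwK γ q j s)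
        * (w (j + (s:ℤ) + 1 + 1) - w (j + (s:ℤ) + 1))|
        ≤ lam * ∑' s : ℕ, (gwb V w (j + (s:ℤ) + 1) * gwK γ q j s)
            * |w (j + (s:ℤ) + 1 + 1) - w (j + (s:ℤ) + 1)| := by
      rw [abs_mul, abs_of_nonneg hlam.le]
      apply mul_le_mul_of_nonneg_left _ hlam.le
      have h1 := norm_tsum_le_tsum_norm (f := fun s : ℕ => (gwb V w (j + (s:ℤ) + 1) * gwK γ q j s)
          * (w (j + (s:ℤ) + 1 + 1) - w (j + (s:ℤ) + 1)))
        (by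
          apply hSCD.congr
          intro s
          rw [Real.norm_eq_abs, abs_mul, abs_of_nonneg (hCnn j s)])
      rw [Real.norm_eq_abs] at h1
      apply h1.trans
      apply le_of_eq
      apply tsum_congr
      intro s
      rw [Real.norm_eq_abs, abs_mul, abs_of_nonneg (hCnn j s)]
    rw [hRid]
    have t1 : |B j * (w (j+1) - w j)| = B j * |w (j+1) - w j| := by
      rw [abs_mul, abs_of_nonneg (hBnn j)]
    have t2 : |lam * V (w j) * (w j - w (j-1))| = lam * V (w j) * |w j - w (j-1)| := by
      rw [abs_mul, abs_of_nonneg (mul_nonneg hlam.le (hvb j).1)]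
    calc |B j * (w (j+1) - w j) + lam * V (w j) * (w j - w (j-1))
          + lam * ∑' s : ℕ, (gwb V w (j + (s:ℤ) + 1) * gwK γ q j s)
              * (w (j + (s:ℤ) + 1 + 1) - w (j + (s:ℤ) + 1))|
        ≤ |B j * (w (j+1) - w j) + lam * V (w j) * (w j - w (j-1))|
          + |lam * ∑' s : ℕ, (gwb V w (j + (s:ℤ) + 1) * gwK γ q j s)
              * (w (j + (s:ℤ) + 1 + 1) - w (j + (s:ℤ) + 1))| := abs_add_le _ _
      _ ≤ |B j * (w (j+1) - w j)| + |lam * V (w j) * (w j - w (j-1))|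
          + |lam * ∑' s : ℕ, (gwb V w (j + (s:ℤ) + 1) * gwK γ q j s)
              * (w (j + (s:ℤ) + 1 + 1) - w (j + (s:ℤ) + 1))| := by
            linarith [abs_add_le (B j * (w (j+1) - w j)) (lam * V (w j) * (w j - w (j-1)))]
      _ ≤ B j * |w (j+1) - w j| + lam * V (w j) * |w j - w (j-1)|
          + lam * ∑' s : ℕ, (gwb V w (j + (s:ℤ) + 1) * gwK γ q j s)
              * |w (j + (s:ℤ) + 1 + 1) - w (j + (s:ℤ) + 1)| := by
            rw [t1, t2]
            linarith [habs3]
  -- summability of the row-tail with absolute values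
  have hSCD : ∀ j : ℤ, Summable (fun s : ℕ => (gwb V w (j + (s:ℤ) + 1) * gwK γ q j s)
      * |w (j + (s:ℤ) + 1 + 1) - w (j + (s:ℤ) + 1)|) := by
    intro j
    apply Summable.of_norm_bounded (Sg.mul_left L)
    intro s
    rw [Real.norm_eq_abs, abs_mul, abs_abs, abs_of_nonneg (hCnn j s)]
    calc (gwb V w (j + (s:ℤ) + 1) * gwK γ q j s) * |w (j + (s:ℤ) + 1 + 1) - w (j + (s:ℤ) + 1)|
        ≤ (L * gwg γ s) * 1 := by
          apply mul_le_mul (hCle j s) (hD1 _) (abs_nonneg _)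
          nlinarith [gw_g_nonneg hγmono s]
      _ = L * gwg γ s := mul_one _
  -- per-j ofReal inequality
  have hofrow : ∀ j : ℤ, ENNReal.ofReal |w' (j+1) - w' j|
      ≤ ENNReal.ofReal (B j * |w (j+1) - w j|)
        + ENNReal.ofReal (lam * V (w j) * |w j - w (j-1)|)
        + ∑' s : ℕ, ENNReal.ofReal (lam * ((gwb V w (j + (s:ℤ) + 1) * gwK γ q j s)
            * |w (j + (s:ℤ) + 1 + 1) - w (j + (s:ℤ) + 1)|)) := by
    intro j
    have hnn1 : 0 ≤ B j * |w (j+1) - w j| := mul_nonneg (hBnn j) (abs_nonneg _)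
    have hnn2 : 0 ≤ lam * V (w j) * |w j - w (j-1)| :=
      mul_nonneg (mul_nonneg hlam.le (hvb j).1) (abs_nonneg _)
    have hnn3 : 0 ≤ lam * ∑' s : ℕ, (gwb V w (j + (s:ℤ) + 1) * gwK γ q j s)
        * |w (j + (s:ℤ) + 1 + 1) - w (j + (s:ℤ) + 1)| :=
      mul_nonneg hlam.le (tsum_nonneg (fun s => mul_nonneg (hCnn j s) (abs_nonneg _)))
    calc ENNReal.ofReal |w' (j+1) - w' j|
        ≤ ENNReal.ofReal (B j * |w (j+1) - w j| + lam * V (w j) * |w j - w (j-1)|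
            + lam * ∑' s : ℕ, (gwb V w (j + (s:ℤ) + 1) * gwK γ q j s)
                * |w (j + (s:ℤ) + 1 + 1) - w (j + (s:ℤ) + 1)|) :=
          ENNReal.ofReal_le_ofReal (hrow j)
      _ = ENNReal.ofReal (B j * |w (j+1) - w j|)
          + ENNReal.ofReal (lam * V (w j) * |w j - w (j-1)|)
          + ENNReal.ofReal (lam * ∑' s : ℕ, (gwb V w (j + (s:ℤ) + 1) * gwK γ q j s)
              * |w (j + (s:ℤ) + 1 + 1) - w (j + (s:ℤ) + 1)|) := by
          rw [ENNReal.ofReal_add (by linarith) hnn3, ENNReal.ofReal_add hnn1 hnn2]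
      _ = ENNReal.ofReal (B j * |w (j+1) - w j|)
          + ENNReal.ofReal (lam * V (w j) * |w j - w (j-1)|)
          + ∑' s : ℕ, ENNReal.ofReal (lam * ((gwb V w (j + (s:ℤ) + 1) * gwK γ q j s)
              * |w (j + (s:ℤ) + 1 + 1) - w (j + (s:ℤ) + 1)|)) := by
          congr 1
          rw [← tsum_mul_left]
          exact ENNReal.ofReal_tsum_of_nonneg
            (fun s => mul_nonneg hlam.le (mul_nonneg (hCnn j s) (abs_nonneg _)))
            ((hSCD j).mul_left lam)
  -- alternative form of gwK
  have hKalt : ∀ (j : ℤ) (s : ℕ), gwK γ q j s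
      = ∑' m : ℕ, gwh γ (m+s) * q (j + (s:ℤ) + 1 + (m:ℤ)) := by
    intro j s
    rw [gwK]
    exact tsum_congr (fun m => by rw [show j + (s:ℤ) + (m:ℤ) + 1 = j + (s:ℤ) + 1 + (m:ℤ) by ring])
  -- inner column sums
  have hSsm : ∀ (j : ℤ) (s : ℕ), Summable (fun m : ℕ => gwh γ (m+s) * q (j + (m:ℤ))) := by
    intro j s
    exact gw_summable_mul (gw_h_tail hconv hγsum s).summable (fun m => hhnn (m+s)) _
      (hX := fun m => habsq _)
  have hSnn : ∀ (j : ℤ) (s : ℕ), 0 ≤ ∑' m : ℕ, gwh γ (m+s) * q (j + (m:ℤ)) :=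
    fun j s => tsum_nonneg (fun m => mul_nonneg (hhnn _) (hq _).1)
  have hSle : ∀ (j : ℤ) (s : ℕ), (∑' m : ℕ, gwh γ (m+s) * q (j + (m:ℤ))) ≤ gwg γ s := by
    intro j s
    calc (∑' m : ℕ, gwh γ (m+s) * q (j + (m:ℤ))) ≤ ∑' m : ℕ, gwh γ (m+s) := by
          apply Summable.tsum_le_tsum _ (hSsm j s) (gw_h_tail hconv hγsum s).summable
          intro m
          nlinarith [(hq (j + (m:ℤ))).2, hhnn (m+s), (hq (j + (m:ℤ))).1]
      _ = gwg γ s := (gw_h_tail hconv hγsum s).tsum_eq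
  -- main computation
  calc ∑' j : ℤ, ENNReal.ofReal |w' (j+1) - w' j|
      ≤ ∑' j : ℤ, (ENNReal.ofReal (B j * |w (j+1) - w j|)
          + ENNReal.ofReal (lam * V (w j) * |w j - w (j-1)|)
          + ∑' s : ℕ, ENNReal.ofReal (lam * ((gwb V w (j + (s:ℤ) + 1) * gwK γ q j s)
              * |w (j + (s:ℤ) + 1 + 1) - w (j + (s:ℤ) + 1)|))) := ENNReal.tsum_le_tsum hofrow
    _ = (∑' j : ℤ, ENNReal.ofReal (B j * |w (j+1) - w j|))
        + (∑' j : ℤ, ENNReal.ofReal (lam * V (w j) * |w j - w (j-1)|))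
        + ∑' j : ℤ, ∑' s : ℕ, ENNReal.ofReal (lam * ((gwb V w (j + (s:ℤ) + 1) * gwK γ q j s)
            * |w (j + (s:ℤ) + 1 + 1) - w (j + (s:ℤ) + 1)|)) := by
        rw [ENNReal.tsum_add, ENNReal.tsum_add]
    _ = (∑' j : ℤ, ENNReal.ofReal (B j * |w (j+1) - w j|))
        + (∑' j : ℤ, ENNReal.ofReal (lam * V (w (j+1)) * |w (j+1) - w j|))
        + ∑' j : ℤ, ∑' s : ℕ, ENNReal.ofReal ((lam * (gwb V w j
            * (∑' m : ℕ, gwh γ (m+s) * q (j + (m:ℤ))))) * |w (j+1) - w j|) := by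
        congr 1
        · congr 1
          have e := (Equiv.subRight (1:ℤ)).tsum_eq
            (fun j : ℤ => ENNReal.ofReal (lam * V (w (j+1)) * |w (j+1) - w j|))
          rw [← e]
          apply tsum_congr
          intro j
          simp only [Equiv.subRight_apply]
          rw [show j - 1 + 1 = j by ring]
        · rw [ENNReal.tsum_comm]
          rw [show (∑' (j : ℤ) (s : ℕ), ENNReal.ofReal ((lam * (gwb V w j
              * (∑' m : ℕ, gwh γ (m+s) * q (j + (m:ℤ))))) * |w (j+1) - w j|))
            = ∑' (s : ℕ) (j : ℤ), ENNReal.ofReal ((lam * (gwb V w j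
              * (∑' m : ℕ, gwh γ (m+s) * q (j + (m:ℤ))))) * |w (j+1) - w j|) from ENNReal.tsum_comm]
          apply tsum_congr
          intro s
          have e := (Equiv.addRight ((s:ℤ)+1)).tsum_eq
            (fun c : ℤ => ENNReal.ofReal ((lam * (gwb V w c
              * (∑' m : ℕ, gwh γ (m+s) * q (c + (m:ℤ))))) * |w (c+1) - w c|))
          rw [← e]
          apply tsum_congr
          intro j
          simp only [Equiv.coe_addRight]
          rw [show j + ((s:ℤ)+1) = j + (s:ℤ) + 1 by ring]
          congr 1
          rw [hKalt j s]
          ring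
    _ = ∑' j : ℤ, ((ENNReal.ofReal (B j) + ENNReal.ofReal (lam * V (w (j+1)))
          + ∑' s : ℕ, ENNReal.ofReal (lam * (gwb V w j
            * (∑' m : ℕ, gwh γ (m+s) * q (j + (m:ℤ)))))) * ENNReal.ofReal |w (j+1) - w j|) := by
        rw [← ENNReal.tsum_add, ← ENNReal.tsum_add]
        apply tsum_congr
        intro j
        rw [add_mul, add_mul, ← ENNReal.tsum_mul_right]
        rw [← ENNReal.ofReal_mul (hBnn j),
            ← ENNReal.ofReal_mul (mul_nonneg hlam.le (hvb (j+1)).1)]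
        congr 1
        apply tsum_congr
        intro s
        rw [← ENNReal.ofReal_mul (mul_nonneg hlam.le (mul_nonneg (hbnn j) (hSnn j s)))]
    _ = ∑' j : ℤ, ENNReal.ofReal |w (j+1) - w j| := by
        apply tsum_congr
        intro j
        have hsumY : Summable (fun s : ℕ => lam * (gwb V w j
            * (∑' m : ℕ, gwh γ (m+s) * q (j + (m:ℤ))))) := by
          apply Summable.of_norm_bounded
            ((Sg.mul_left L).mul_left lam)
          intro s
          rw [Real.norm_eq_abs, abs_of_nonneg
            (mul_nonneg hlam.le (mul_nonneg (hbnn j) (hSnn j s)))]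
          have h1 : gwb V w j * (∑' m : ℕ, gwh γ (m+s) * q (j + (m:ℤ))) ≤ L * gwg γ s := by
            nlinarith [hbnn j, hbL j, hSnn j s, hSle j s, gw_g_nonneg hγmono s]
          nlinarith
        have hY : (∑' s : ℕ, ENNReal.ofReal (lam * (gwb V w j
            * (∑' m : ℕ, gwh γ (m+s) * q (j + (m:ℤ))))))
            = ENNReal.ofReal (lam * (gwb V w j
              * ∑' s : ℕ, ∑' m : ℕ, gwh γ (m+s) * q (j + (m:ℤ)))) := by
          rw [← ENNReal.ofReal_tsum_of_nonneg
            (fun s => mul_nonneg hlam.le (mul_nonneg (hbnn j) (hSnn j s))) hsumY]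
          congr 1
          rw [tsum_mul_left, tsum_mul_left]
        rw [hY]
        have hrestnn : 0 ≤ lam * (gwb V w j
            * ∑' s : ℕ, ∑' m : ℕ, gwh γ (m+s) * q (j + (m:ℤ))) :=
          mul_nonneg hlam.le (mul_nonneg (hbnn j)
            (tsum_nonneg (fun s => hSnn j s)))
        rw [← ENNReal.ofReal_add (hBnn j) (mul_nonneg hlam.le (hvb (j+1)).1),
            ← ENNReal.ofReal_add (add_nonneg (hBnn j) (mul_nonneg hlam.le (hvb (j+1)).1)) hrestnn]
        have hcoleq : B j + lam * V (w (j+1)) + lam * (gwb V w j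
            * ∑' s : ℕ, ∑' m : ℕ, gwh γ (m+s) * q (j + (m:ℤ))) = 1 := by
          have hc := gw_col (lam := lam) hM hL hVmono hγnn hγmono hγsum hconv hq hw j
          simp only [hB]
          linarith [hc]
        rw [hcoleq, ENNReal.ofReal_one, one_mul]
end

/-- Spatial total variation diminishing property (convex weights), under the
strong CFL condition `λ (M + 2L) ≤ 1`. -/
theorem godunov_W_TVD_space
    (lam M L : ℝ) (hlam : 0 < lam) (hM : 0 ≤ M) (hL : 0 ≤ L)
    (V : ℝ → ℝ)
    (hVlip : ∀ x y : ℝ, |V x - V y| ≤ L * |x - y|)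
    (hVmono : ∀ x ∈ Set.Icc (0:ℝ) 1, ∀ y ∈ Set.Icc (0:ℝ) 1, x ≤ y → V y ≤ V x)
    (hVbd : ∀ ξ ∈ Set.Icc (0:ℝ) 1, V ξ ∈ Set.Icc (0:ℝ) M)
    (γ : ℕ → ℝ)
    (hγnn : ∀ k, 0 ≤ γ k) (hγmono : ∀ k, γ (k+1) ≤ γ k)
    (hγsum : HasSum γ 1)
    (ρ0 : ℤ → ℝ) (hρ0 : ∀ j, ρ0 j ∈ Set.Icc (0:ℝ) 1)
    (ρ W : ℕ → ℤ → ℝ)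
    (hinit : ∀ j : ℤ, ρ 0 j = ρ0 j)
    (hW : ∀ (n : ℕ) (j : ℤ), W n j = ∑' k : ℕ, γ k * ρ n (j + (k:ℤ)))
    (hupd : ∀ (n : ℕ) (j : ℤ),
      ρ (n+1) j = ρ n j + lam * (ρ n (j-1) * V (W n j) - ρ n j * V (W n (j+1))))
    (hconv : ∀ k : ℕ, 2 * γ (k+1) ≤ γ k + γ (k+2))
    (hCFL : lam * (M + 2*L) ≤ 1) :
    ∀ n : ℕ,
      (∑' j : ℤ, ENNReal.ofReal |W (n+1) (j+1) - W (n+1) j| ≤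
        ∑' j : ℤ, ENNReal.ofReal |W n (j+1) - W n j|) ∧
      (∑' j : ℤ, ENNReal.ofReal |W n (j+1) - W n j| ≤
        ∑' j : ℤ, ENNReal.ofReal |ρ0 (j+1) - ρ0 j|) := by
  have hρ : ∀ n, ∀ j : ℤ, ρ n j ∈ Set.Icc (0:ℝ) 1 := by
    intro n
    induction n with
    | zero => intro j; rw [hinit j]; exact hρ0 j
    | succ n ih =>
      intro j
      rw [hupd n j]
      exact gw_rho_step hlam hM hL hVlip hVmono hVbd hγnn hγmono hγsum hCFL ih (hW n) j
  have hstep : ∀ n : ℕ,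
      ∑' j : ℤ, ENNReal.ofReal |W (n+1) (j+1) - W (n+1) j|
        ≤ ∑' j : ℤ, ENNReal.ofReal |W n (j+1) - W n j| := by
    intro n
    exact gw_step hlam hM hL hVlip hVmono hVbd hγnn hγmono hγsum hconv hCFL
      (hρ n) (hW n) (ρ (n+1)) (W (n+1)) (hupd n) (hW (n+1))
  have hinitTV : ∑' j : ℤ, ENNReal.ofReal |W 0 (j+1) - W 0 j|
      ≤ ∑' j : ℤ, ENNReal.ofReal |ρ0 (j+1) - ρ0 j| := by
    apply gw_tv_init hγnn hγsum
      (q := ρ0) (fun j => abs_le.mpr ⟨by linarith [(hρ0 j).1], (hρ0 j).2⟩)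
    intro j
    rw [hW 0 j]
    exact tsum_congr (fun k => by rw [hinit])
  intro n
  refine ⟨hstep n, ?_⟩
  induction n with
  | zero => exact hinitTV
  | succ n ih => exact (hstep n).trans ih
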